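/- arXiv:2003.08081 — 3 statements merged into one kernel-verified Lean document; each statement's English description precedes it below -/
import Mathlib

section
/- Fix real δ, ω_p with 0 < δ < ω_p and Δt > 0. For every real τ with τ < −Δt/2, the inverse Fourier integral of the Green function vanishes: (1/2π) ∫_ℝ (e^{iωΔt/2} − e^{−iωΔt/2}) e^{iωτ} / (iω (ω² − 2iδω − ω_p²)) dω = 0 (causality of the Green function of the Lorentz medium). -/
open MeasureTheory Set Complex Filter FourierTransform Real

lemma integrableOn_cexp_Ioi {c : ℂ} (hc : c.re < 0) :
    IntegrableOn (fun t : ℝ => Complex.exp (c * t)) (Ioi 0) := by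
  apply Integrable.mono' ((exp_neg_integrableOn_Ioi 0 (by linarith : 0 < -c.re)))
  · exact (Complex.continuous_exp.comp (continuous_const.mul Complex.continuous_ofReal)).aestronglyMeasurable
  · filter_upwards with t
    simp only [Complex.norm_exp, neg_neg]
    simp [mul_comm]

lemma hasDerivAt_cexp_mul (c : ℂ) (x : ℝ) :
    HasDerivAt (fun t : ℝ => Complex.exp (c * t)) (c * Complex.exp (c * x)) x := by
  have h1 : HasDerivAt (fun t : ℝ => c * (t : ℂ)) c x := by
    simpa using (Complex.ofRealCLM.hasDerivAt (x := x)).const_mul c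
  simpa [mul_comm] using h1.cexp

lemma integral_cexp_Ioi {c : ℂ} (hc : c.re < 0) :
    ∫ t in Ioi (0:ℝ), Complex.exp (c * t) = -c⁻¹ := by
  have hc0 : c ≠ 0 := fun h => by simp [h] at hc
  have key := integral_Ioi_of_hasDerivAt_of_tendsto' (a := 0) (m := 0)
    (f := fun t : ℝ => c⁻¹ * Complex.exp (c * t))
    (f' := fun t : ℝ => Complex.exp (c * t))
    (fun x _ => by
      have := (hasDerivAt_cexp_mul c x).const_mul c⁻¹
      exact this.congr_deriv (by rw [← mul_assoc, inv_mul_cancel₀ hc0, one_mul]))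
    (integrableOn_cexp_Ioi hc)
    (by
      rw [tendsto_zero_iff_norm_tendsto_zero]
      have h2 : Tendsto (fun t : ℝ => c.re * t) atTop atBot :=
        tendsto_id.const_mul_atTop_of_neg hc
      have h3 : Tendsto (fun t : ℝ => ‖c⁻¹‖ * Real.exp (c.re * t)) atTop (nhds (‖c⁻¹‖ * 0)) :=
        (Real.tendsto_exp_atBot.comp h2).const_mul _
      simpa [Complex.norm_exp, mul_comm] using h3)
  simpa using key

lemma sub_ne_zero_of_im {p : ℂ} (hp : 0 < p.im) (ω : ℝ) : (ω : ℂ) - p ≠ 0 := by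
  intro h
  have := congrArg Complex.im h
  simp at this
  linarith

lemma norm_sub_ge_im {p : ℂ} (hp : 0 < p.im) (ω : ℝ) : p.im ≤ ‖(ω : ℂ) - p‖ := by
  have h := Complex.abs_im_le_norm ((ω : ℂ) - p)
  simp only [Complex.sub_im, Complex.ofReal_im, zero_sub, abs_neg] at h
  calc p.im ≤ |p.im| := le_abs_self _
    _ ≤ _ := h


lemma inv_mul_cont (p q : ℂ) (hp : 0 < p.im) (hq : 0 < q.im) :
    Continuous (fun ω : ℝ => (((ω : ℂ) - p) * ((ω : ℂ) - q))⁻¹) := by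
  apply Continuous.inv₀
  · continuity
  · intro ω
    exact mul_ne_zero (sub_ne_zero_of_im hp ω) (sub_ne_zero_of_im hq ω)

lemma integrable_inv_mul (p q : ℂ) (hp : 0 < p.im) (hq : 0 < q.im) :
    Integrable (fun ω : ℝ => (((ω : ℂ) - p) * ((ω : ℂ) - q))⁻¹) := by
  set R : ℝ := 1 + 2 * ‖p‖ + 2 * ‖q‖ with hR
  have hRp : 2 * ‖p‖ ≤ R - 1 := by
    have := norm_nonneg q; simp [hR]; linarith
  have hRq : 2 * ‖q‖ ≤ R - 1 := by
    have := norm_nonneg p; simp [hR]; linarith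
  have hR1 : 1 ≤ R := by
    have := norm_nonneg p; have := norm_nonneg q; simp [hR]; linarith
  set C : ℝ := max 8 ((1 + R ^ 2) / (p.im * q.im)) with hC
  have hC8 : (8:ℝ) ≤ C := le_max_left _ _
  have hCR : (1 + R ^ 2) / (p.im * q.im) ≤ C := le_max_right _ _
  have hcont := inv_mul_cont p q hp hq
  apply Integrable.mono' ((integrable_inv_one_add_sq).const_mul C) hcont.aestronglyMeasurable
  filter_upwards with ω
  have h1 : (0:ℝ) < 1 + ω ^ 2 := by positivity
  set A : ℝ := ‖(ω:ℂ)-p‖ with hA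
  set B : ℝ := ‖(ω:ℂ)-q‖ with hB
  have hApos : 0 < A := norm_pos_iff.mpr (sub_ne_zero_of_im hp ω)
  have hBpos : 0 < B := norm_pos_iff.mpr (sub_ne_zero_of_im hq ω)
  have hnorm : ‖(((ω : ℂ) - p) * ((ω : ℂ) - q))⁻¹‖ = (A * B)⁻¹ := by
    rw [norm_inv, norm_mul, hA, hB]
  rw [hnorm, inv_eq_one_div]
  rw [show C * (1 + ω ^ 2)⁻¹ = C / (1 + ω ^ 2) by ring, div_le_div_iff₀ (by positivity) h1]
  rw [one_mul]
  have key : 1 + ω ^ 2 ≤ C * (A * B) := by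
    rcases le_or_gt |ω| R with hcase | hcase
    · -- small ω : A ≥ p.im, B ≥ q.im
      have h2 : p.im ≤ A := norm_sub_ge_im hp ω
      have h3 : q.im ≤ B := norm_sub_ge_im hq ω
      have h4 : (1 + R ^ 2) ≤ C * (p.im * q.im) := by
        rw [div_le_iff₀ (by positivity)] at hCR; linarith
      have h5 : ω ^ 2 ≤ R ^ 2 := by
        rw [← _root_.sq_abs ω]; exact pow_le_pow_left₀ (abs_nonneg _) hcase 2
      have hCpos : (0:ℝ) < C := by linarith
      nlinarith [mul_le_mul h2 h3 (le_of_lt hq) (by linarith : (0:ℝ) ≤ A)]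
    · -- large ω
      have hωp : ‖(ω:ℂ)‖ - ‖p‖ ≤ A := by
        simpa [hA] using norm_sub_norm_le (ω:ℂ) p
      have hωq : ‖(ω:ℂ)‖ - ‖q‖ ≤ B := by
        simpa [hB] using norm_sub_norm_le (ω:ℂ) q
      have habsω : ‖(ω:ℂ)‖ = |ω| := (Complex.norm_real ω).trans (Real.norm_eq_abs ω)
      rw [habsω] at hωp hωq
      have h6 : (|ω| + 1) / 2 ≤ A := by linarith
      have h7 : (|ω| + 1) / 2 ≤ B := by linarith
      have h8 : (|ω| + 1) / 2 * ((|ω| + 1) / 2) ≤ A * B :=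
        mul_le_mul h6 h7 (by positivity) (by linarith)
      have h9 : 1 + ω ^ 2 ≤ (|ω| + 1) ^ 2 := by
        rw [← _root_.sq_abs ω]; nlinarith [abs_nonneg ω]
      nlinarith
  linarith


noncomputable def kk (p q : ℂ) : ℝ → ℂ := fun t =>
  if (0:ℝ) ≤ t then (Complex.I / (p - q)) * (Complex.exp (Complex.I * p * t) - Complex.exp (Complex.I * q * t)) else 0

lemma kk_cont (p q : ℂ) : Continuous (kk p q) := by
  apply Continuous.if_le
  · continuity
  · exact continuous_const
  · exact continuous_const
  · exact continuous_id
  · intro t ht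
    simp [← ht]

lemma kk_eq_indicator (p q : ℂ) : kk p q = Set.indicator (Ici (0:ℝ))
    (fun t => (Complex.I / (p - q)) * (Complex.exp ((Complex.I * p) * t) - Complex.exp ((Complex.I * q) * t))) := by
  funext t
  by_cases h : (0:ℝ) ≤ t <;> simp [kk, h, Set.indicator, mul_assoc]

lemma kk_integrable (p q : ℂ) (hp : 0 < p.im) (hq : 0 < q.im) : Integrable (kk p q) := by
  rw [kk_eq_indicator]
  rw [integrable_indicator_iff measurableSet_Ici, IntegrableOn, Measure.restrict_congr_set Ioi_ae_eq_Ici.symm]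
  refine (Integrable.sub ?_ ?_).const_mul _ <;>
    [exact integrableOn_cexp_Ioi (by simp [hp] : (Complex.I * p).re < 0);
     exact integrableOn_cexp_Ioi (by simp [hq] : (Complex.I * q).re < 0)]

lemma kk_fourier (p q : ℂ) (hp : 0 < p.im) (hq : 0 < q.im) (hpq : p ≠ q) (ξ : ℝ) :
    𝓕 (kk p q) ξ = ((2 * π * ξ - p) * (2 * π * ξ - q))⁻¹ := by
  rw [Real.fourier_real_eq_integral_exp_smul]
  have hind : ∀ v : ℝ, Complex.exp (↑(-2 * π * v * ξ) * Complex.I) • kk p q v =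
      Set.indicator (Ici (0:ℝ)) (fun v : ℝ =>
        (Complex.I / (p - q)) * (Complex.exp ((Complex.I * (p - 2 * π * ξ)) * v)
          - Complex.exp ((Complex.I * (q - 2 * π * ξ)) * v))) v := by
    intro v
    by_cases h : (0:ℝ) ≤ v
    · simp only [kk, if_pos h, Set.indicator_of_mem (mem_Ici.mpr h), smul_eq_mul]
      rw [mul_comm, mul_assoc, sub_mul, ← Complex.exp_add, ← Complex.exp_add, mul_sub]
      push_cast
      ring_nf
    · rw [Set.indicator_of_notMem (by simpa using h)]
      simp [kk, if_neg h]
  simp only [hind]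
  rw [integral_indicator measurableSet_Ici, Measure.restrict_congr_set Ioi_ae_eq_Ici.symm]
  have hrp : (Complex.I * (p - 2 * π * ξ)).re < 0 := by simp [hp]
  have hrq : (Complex.I * (q - 2 * π * ξ)).re < 0 := by simp [hq]
  rw [integral_const_mul, integral_sub (integrableOn_cexp_Ioi hrp) (integrableOn_cexp_Ioi hrq),
    integral_cexp_Ioi hrp, integral_cexp_Ioi hrq]
  have h1 : p - 2 * π * ξ ≠ 0 := by
    have := sub_ne_zero_of_im hp (2 * π * ξ); push_cast at this ⊢
    intro h; apply this; rw [← neg_eq_zero] at h; rw [← h]; ring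
  have h2 : q - 2 * π * ξ ≠ 0 := by
    have := sub_ne_zero_of_im hq (2 * π * ξ); push_cast at this ⊢
    intro h; apply this; rw [← neg_eq_zero] at h; rw [← h]; ring
  have h3 : (2:ℂ) * π * ξ - p ≠ 0 := by
    intro h; apply h1; rw [← neg_eq_zero] at h; rw [← h]; ring
  have h4 : (2:ℂ) * π * ξ - q ≠ 0 := by
    intro h; apply h2; rw [← neg_eq_zero] at h; rw [← h]; ring
  have hpq' : p - q ≠ 0 := sub_ne_zero.mpr hpq
  field_simp
  ring




lemma key (p q : ℂ) (hp : 0 < p.im) (hq : 0 < q.im) (hpq : p ≠ q) {x : ℝ} (hx : x < 0) :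
    (∫ ω : ℝ, Complex.exp (Complex.I * ω * x) * (((ω:ℂ) - p) * ((ω:ℂ) - q))⁻¹) = 0 := by
  set F : ℝ → ℂ := fun ω : ℝ => Complex.exp (Complex.I * ω * x) * (((ω:ℂ) - p) * ((ω:ℂ) - q))⁻¹
    with hF
  have hFk : 𝓕 (kk p q) = fun ξ : ℝ => (((2 * π * ξ : ℝ) : ℂ) - p)⁻¹ * (((2 * π * ξ : ℝ) : ℂ) - q)⁻¹ := by
    funext ξ
    rw [kk_fourier p q hp hq hpq ξ, mul_inv]
    push_cast
    ring_nf
  have hFk_int : Integrable (𝓕 (kk p q)) := by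
    rw [hFk]
    have h2π : (2 * π : ℝ) ≠ 0 := by positivity
    have := (integrable_inv_mul p q hp hq).comp_mul_left' h2π
    simpa [mul_inv, mul_comm] using this
  have hinv : 𝓕⁻ (𝓕 (kk p q)) x = kk p q x :=
    (kk_integrable p q hp hq).fourierInv_fourier_eq hFk_int (kk_cont p q).continuousAt
  have hkx : kk p q x = 0 := by simp [kk, not_le.mpr hx]
  have hstep : 𝓕⁻ (𝓕 (kk p q)) x = ∫ ξ : ℝ, F (2 * π * ξ) := by
    rw [Real.fourierInv_eq_fourier_neg, Real.fourier_real_eq_integral_exp_smul,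
      hFk]
    refine integral_congr_ae (Filter.Eventually.of_forall fun ξ => ?_)
    simp only [hF, smul_eq_mul, mul_inv]
    push_cast
    ring_nf
  have hcomp : (∫ ξ : ℝ, F (2 * π * ξ)) = |(2 * π : ℝ)⁻¹| • ∫ ω : ℝ, F ω :=
    Measure.integral_comp_mul_left F (2 * π)
  have h0 : |(2 * π : ℝ)⁻¹| • (∫ ω : ℝ, F ω) = 0 := by
    rw [← hcomp, ← hstep, hinv, hkx]
  rcases smul_eq_zero.mp h0 with h | h
  · exfalso
    have : (0:ℝ) < |(2 * π : ℝ)⁻¹| := by positivity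
    linarith [this.ne' h]
  · exact h





set_option maxHeartbeats 1000000 in
/-- Fix real `δ, ω_p` with `0 < δ < ω_p` and `Δt > 0`. For every real
`τ < −Δt/2`, the inverse Fourier integral of the Green function vanishes:
`(1/2π) ∫_ℝ (e^{iωΔt/2} − e^{−iωΔt/2}) e^{iωτ} / (iω (ω² − 2iδω − ω_p²)) dω = 0`
(causality of the Green function of the Lorentz medium). -/
theorem green_function_causality (δ ωp Δt τ : ℝ)
    (hδ : 0 < δ) (hδω : δ < ωp) (hΔt : 0 < Δt) (hτ : τ < -(Δt / 2)) :
    (1 / (2 * (Real.pi : ℂ))) * (∫ ω : ℝ,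
        (Complex.exp (Complex.I * ω * (Δt / 2)) -
            Complex.exp (-(Complex.I * ω * (Δt / 2)))) * Complex.exp (Complex.I * ω * τ) /
          (Complex.I * ω * ((ω : ℂ) ^ 2 - 2 * Complex.I * δ * ω - (ωp : ℂ) ^ 2))) = 0 := by
  have hsq2 : 0 < ωp ^ 2 - δ ^ 2 := by nlinarith
  set sq : ℝ := Real.sqrt (ωp ^ 2 - δ ^ 2) with hsq_def
  have hsqpos : 0 < sq := Real.sqrt_pos.mpr hsq2
  have hsqsq : (sq:ℝ) ^ 2 = ωp ^ 2 - δ ^ 2 := Real.sq_sqrt hsq2.le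
  set p : ℂ := (sq:ℂ) + (δ:ℂ) * Complex.I with hp_def
  set q : ℂ := -(sq:ℂ) + (δ:ℂ) * Complex.I with hq_def
  have hpim : 0 < p.im := by simp [hp_def, hδ]
  have hqim : 0 < q.im := by simp [hq_def, hδ]
  have hpq : p ≠ q := by
    intro h
    have := congrArg Complex.re h
    simp [hp_def, hq_def] at this
    linarith
  have hquad : ∀ ω : ℝ, (ω : ℂ) ^ 2 - 2 * Complex.I * δ * ω - (ωp : ℂ) ^ 2
      = ((ω:ℂ) - p) * ((ω:ℂ) - q) := by
    intro ω
    have hs : (sq:ℂ) ^ 2 = (ωp:ℂ) ^ 2 - (δ:ℂ) ^ 2 := by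
      exact_mod_cast congrArg (Complex.ofReal) hsqsq
    simp only [hp_def, hq_def]
    linear_combination hs - (δ:ℂ) ^ 2 * Complex.I_sq
  set a : ℝ := τ + Δt / 2 with ha_def
  set b : ℝ := τ - Δt / 2 with hb_def
  have ha0 : a < 0 := by simp [ha_def]; linarith
  have hba : b < a := by simp [ha_def, hb_def]; linarith
  -- step A: rewrite integrand
  have h0 : ∀ᵐ ω : ℝ, ω ≠ 0 := by
    filter_upwards [compl_mem_ae_iff.mpr (Real.volume_singleton (a := 0))] with ω hω
    simpa using hω
  have stepA : (∫ ω : ℝ,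
        (Complex.exp (Complex.I * ω * (Δt / 2)) -
            Complex.exp (-(Complex.I * ω * (Δt / 2)))) * Complex.exp (Complex.I * ω * τ) /
          (Complex.I * ω * ((ω : ℂ) ^ 2 - 2 * Complex.I * δ * ω - (ωp : ℂ) ^ 2)))
      = ∫ ω : ℝ, ∫ s in Ioc b a,
          Complex.exp (Complex.I * ω * s) * (((ω:ℂ) - p) * ((ω:ℂ) - q))⁻¹ := by
    refine integral_congr_ae ?_
    filter_upwards [h0] with ω hω
    have hω' : (ω:ℂ) ≠ 0 := Complex.ofReal_ne_zero.mpr hω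
    have hIω : Complex.I * (ω:ℂ) ≠ 0 := mul_ne_zero Complex.I_ne_zero hω'
    rw [integral_mul_const, ← intervalIntegral.integral_of_le hba.le,
      integral_exp_mul_complex hIω, hquad ω]
    have hne1 : (ω:ℂ) - p ≠ 0 := by
      intro h
      have := congrArg Complex.im h
      simp [hp_def] at this
      linarith
    have hne2 : (ω:ℂ) - q ≠ 0 := by
      intro h
      have := congrArg Complex.im h
      simp [hq_def] at this
      linarith
    have ea : Complex.exp (Complex.I * (ω:ℂ) * ((a:ℝ):ℂ))
        = Complex.exp (Complex.I * ω * τ) * Complex.exp (Complex.I * ω * (Δt / 2)) := by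
      rw [← Complex.exp_add]; congr 1; push_cast [ha_def]; ring
    have eb : Complex.exp (Complex.I * (ω:ℂ) * ((b:ℝ):ℂ))
        = Complex.exp (Complex.I * ω * τ) * Complex.exp (-(Complex.I * ω * (Δt / 2))) := by
      rw [← Complex.exp_add]; congr 1; push_cast [hb_def]; ring
    rw [ea, eb]
    field_simp
  rw [stepA]
  -- step B: Fubini
  have hcont2 : Continuous (fun z : ℝ × ℝ =>
      Complex.exp (Complex.I * z.1 * z.2) * (((z.1:ℂ) - p) * ((z.1:ℂ) - q))⁻¹) := by
    exact (Complex.continuous_exp.comp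
        (((continuous_const.mul (Complex.continuous_ofReal.comp continuous_fst)).mul
          (Complex.continuous_ofReal.comp continuous_snd)))).mul
      ((inv_mul_cont p q hpim hqim).comp continuous_fst)
  have hprod : Integrable (fun z : ℝ × ℝ =>
      Complex.exp (Complex.I * z.1 * z.2) * (((z.1:ℂ) - p) * ((z.1:ℂ) - q))⁻¹)
      (volume.prod (volume.restrict (Ioc b a))) := by
    rw [integrable_prod_iff hcont2.aestronglyMeasurable]
    constructor
    · refine Filter.Eventually.of_forall fun ω => ?_
      show Integrable (fun s : ℝ => Complex.exp (Complex.I * ω * s) *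
        (((ω:ℂ) - p) * ((ω:ℂ) - q))⁻¹) (volume.restrict (Ioc b a))
      exact (Continuous.mul (Complex.continuous_exp.comp
        ((continuous_const.mul Complex.continuous_ofReal))) continuous_const).integrableOn_Ioc
    · show Integrable (fun ω : ℝ => ∫ s in Ioc b a,
          ‖Complex.exp (Complex.I * ω * s) * (((ω:ℂ) - p) * ((ω:ℂ) - q))⁻¹‖) volume
      have heq : ∀ ω : ℝ, (∫ s in Ioc b a, ‖Complex.exp (Complex.I * ω * s) * (((ω:ℂ) - p) * ((ω:ℂ) - q))⁻¹‖)
          = (volume (Ioc b a)).toReal * ‖(((ω:ℂ) - p) * ((ω:ℂ) - q))⁻¹‖ := by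
        intro ω
        have : ∀ s : ℝ, ‖Complex.exp (Complex.I * ω * s) * (((ω:ℂ) - p) * ((ω:ℂ) - q))⁻¹‖
            = ‖(((ω:ℂ) - p) * ((ω:ℂ) - q))⁻¹‖ := by
          intro s
          rw [norm_mul]
          simp [Complex.norm_exp]
        simp only [this, integral_const, smul_eq_mul, measureReal_def, Measure.restrict_apply, MeasurableSet.univ,
          univ_inter]
      simp only [heq]
      exact ((integrable_inv_mul p q hpim hqim).norm).const_mul _
  have hswap := integral_integral_swap (f := fun (ω : ℝ) (s : ℝ) =>
      Complex.exp (Complex.I * ω * s) * (((ω:ℂ) - p) * ((ω:ℂ) - q))⁻¹) hprod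
  rw [hswap]
  have : ∀ s ∈ Ioc b a, (∫ ω : ℝ,
      Complex.exp (Complex.I * ω * s) * (((ω:ℂ) - p) * ((ω:ℂ) - q))⁻¹) = 0 := by
    intro s hs
    exact key p q hpim hqim hpq (lt_of_le_of_lt hs.2 ha0)
  rw [setIntegral_congr_fun measurableSet_Ioc this]
  simp
end

section
/- Fix real δ, ω_p with 0 < δ < ω_p, Δt > 0, t_0 ∈ ℝ, set t_n = t_0 + nΔt, z⁺ = iδ + √(ω_p² − δ²), z⁻ = iδ − √(ω_p² − δ²), and c^± = (e^{iz^±Δt/2} − e^{−iz^±Δt/2})/(z^±(z^∓ − z^±)). Let E : ℕ → ℂ and define F^± : ℕ → ℂ by F^±(0) = c^± E(0) and F^±(N) = F^±(N−1) e^{iz^±Δt} + c^± E(N). Then for every N and every real t, Σ_{n=0}^{N} E(n) · G(t; t_n, Δt) = e^{iz⁺(t−t_N)} F⁺(N) + e^{iz⁻(t−t_N)} F⁻(N), where G(t; t_n, Δt) = Σ_{±} (e^{iz^±Δt/2} − e^{−iz^±Δt/2}) e^{iz^±(t−t_n)} / (z^±(z^∓ − z^±)). -/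
/-- Fix real `δ, ω_p` with `0 < δ < ω_p`, `Δt > 0`, `t_0 ∈ ℝ`, set
`t_n = t_0 + nΔt`, `z⁺ = iδ + √(ω_p² − δ²)`, `z⁻ = iδ − √(ω_p² − δ²)`, and
`c^± = (e^{iz^±Δt/2} − e^{−iz^±Δt/2})/(z^±(z^∓ − z^±))`. Let `E : ℕ → ℂ` and define
`F^± : ℕ → ℂ` by `F^±(0) = c^± E(0)` and `F^±(N) = F^±(N−1) e^{iz^±Δt} + c^± E(N)`.
Then for every `N` and every real `t`,
`Σ_{n=0}^{N} E(n) · G(t; t_n, Δt) = e^{iz⁺(t−t_N)} F⁺(N) + e^{iz⁻(t−t_N)} F⁻(N)`,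
where `G(t; t_n, Δt) = Σ_± (e^{iz^±Δt/2} − e^{−iz^±Δt/2}) e^{iz^±(t−t_n)} / (z^±(z^∓ − z^±))`. -/
theorem tgm_two_accumulator_identity (δ ωp Δt t_0 : ℝ)
    (hδ : 0 < δ) (hδω : δ < ωp) (hΔt : 0 < Δt)
    (zp zm : ℂ)
    (hzp : zp = Complex.I * δ + Real.sqrt (ωp ^ 2 - δ ^ 2))
    (hzm : zm = Complex.I * δ - Real.sqrt (ωp ^ 2 - δ ^ 2))
    (cp cm : ℂ)
    (hcp : cp = (Complex.exp (Complex.I * zp * (Δt / 2)) -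
        Complex.exp (-(Complex.I * zp * (Δt / 2)))) / (zp * (zm - zp)))
    (hcm : cm = (Complex.exp (Complex.I * zm * (Δt / 2)) -
        Complex.exp (-(Complex.I * zm * (Δt / 2)))) / (zm * (zp - zm)))
    (E Fp Fm : ℕ → ℂ)
    (hFp0 : Fp 0 = cp * E 0)
    (hFp : ∀ N : ℕ, Fp (N + 1) = Fp N * Complex.exp (Complex.I * zp * Δt) + cp * E (N + 1))
    (hFm0 : Fm 0 = cm * E 0)
    (hFm : ∀ N : ℕ, Fm (N + 1) = Fm N * Complex.exp (Complex.I * zm * Δt) + cm * E (N + 1))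
    (G : ℝ → ℕ → ℂ)
    (hG : ∀ (t : ℝ) (n : ℕ), G t n =
      (Complex.exp (Complex.I * zp * (Δt / 2)) - Complex.exp (-(Complex.I * zp * (Δt / 2)))) *
          Complex.exp (Complex.I * zp * ((t : ℂ) - ((t_0 : ℂ) + (n : ℂ) * Δt))) /
            (zp * (zm - zp)) +
      (Complex.exp (Complex.I * zm * (Δt / 2)) - Complex.exp (-(Complex.I * zm * (Δt / 2)))) *
          Complex.exp (Complex.I * zm * ((t : ℂ) - ((t_0 : ℂ) + (n : ℂ) * Δt))) /
            (zm * (zp - zm))) :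
    ∀ (N : ℕ) (t : ℝ),
      ∑ n ∈ Finset.range (N + 1), E n * G t n =
        Complex.exp (Complex.I * zp * ((t : ℂ) - ((t_0 : ℂ) + (N : ℂ) * Δt))) * Fp N +
        Complex.exp (Complex.I * zm * ((t : ℂ) - ((t_0 : ℂ) + (N : ℂ) * Δt))) * Fm N := by
  intro N t
  induction N with
  | zero =>
      rw [Finset.sum_range_one, hG t 0, hFp0, hFm0, hcp, hcm]
      simp only [Nat.cast_zero, zero_mul, add_zero]
      ring
  | succ N ih =>
      have key : ∀ z : ℂ,
          Complex.exp (Complex.I * z * ((t : ℂ) - ((t_0 : ℂ) + ((N : ℂ) + 1) * Δt))) *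
            Complex.exp (Complex.I * z * Δt) =
          Complex.exp (Complex.I * z * ((t : ℂ) - ((t_0 : ℂ) + (N : ℂ) * Δt))) := by
        intro z
        rw [← Complex.exp_add]
        congr 1
        ring
      rw [Finset.sum_range_succ, ih, hG, hFp, hFm, hcp, hcm]
      push_cast
      rw [← key zp, ← key zm]
      ring
end

section
/- Fix real δ, ω_p with 0 < δ < ω_p and Δt > 0, and let z⁺ = iδ + √(ω_p² − δ²), z⁻ = iδ − √(ω_p² − δ²). Then |e^{iz⁺Δt}| = |e^{iz⁻Δt}| = e^{−δΔt} < 1. Consequently, for any c ∈ ℂ, any z ∈ {z⁺, z⁻}, and any sequence E : ℕ → ℂ with |E(n)| ≤ M for all n, the recurrence F(0) = c·E(0), F(N) = F(N−1) e^{izΔt} + c·E(N) satisfies |F(N)| ≤ |c| M / (1 − e^{−δΔt}) for every N; in particular the Transient Green Method recurrence is stable for every time step Δt > 0. -/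
lemma tgm_aux (r B : ℝ) (hr0 : 0 ≤ r) (hr1 : r < 1) (hB : 0 ≤ B)
    (q : ℂ) (hq : ‖q‖ = r) (G : ℕ → ℂ) (b : ℕ → ℂ)
    (hb : ∀ n, ‖b n‖ ≤ B) (h0 : G 0 = b 0)
    (hrec : ∀ N, G (N + 1) = G N * q + b (N + 1)) :
    ∀ N, ‖G N‖ ≤ B / (1 - r) := by
  have h1r : 0 < 1 - r := by linarith
  intro N
  induction N with
  | zero =>
    rw [h0]
    calc ‖b 0‖ ≤ B := hb 0
    _ ≤ B / (1 - r) := by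
        rw [le_div_iff₀ h1r]; nlinarith
  | succ n ih =>
    rw [hrec n]
    calc ‖G n * q + b (n + 1)‖
        ≤ ‖G n * q‖ + ‖b (n + 1)‖ := norm_add_le _ _
      _ = ‖G n‖ * r + ‖b (n + 1)‖ := by rw [norm_mul, hq]
      _ ≤ (B / (1 - r)) * r + B := by
          exact add_le_add (mul_le_mul_of_nonneg_right ih hr0) (hb (n + 1))
      _ = B / (1 - r) := by field_simp; ring

/-- Fix real `δ, ω_p` with `0 < δ < ω_p` and `Δt > 0`, and let
`z⁺ = iδ + √(ω_p² − δ²)`, `z⁻ = iδ − √(ω_p² − δ²)`. Then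
`|e^{iz⁺Δt}| = |e^{iz⁻Δt}| = e^{−δΔt} < 1`. Consequently, for any `c ∈ ℂ`, any
`z ∈ {z⁺, z⁻}`, and any sequence `E : ℕ → ℂ` with `|E(n)| ≤ M` for all `n`, the recurrence
`F(0) = c·E(0)`, `F(N) = F(N−1) e^{izΔt} + c·E(N)` satisfies
`|F(N)| ≤ |c| M / (1 − e^{−δΔt})` for every `N`; in particular the Transient Green Method
recurrence is stable for every time step `Δt > 0`. -/
theorem tgm_unconditional_stability (δ ωp Δt : ℝ)
    (hδ : 0 < δ) (hδω : δ < ωp) (hΔt : 0 < Δt)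
    (zp zm : ℂ)
    (hzp : zp = Complex.I * δ + Real.sqrt (ωp ^ 2 - δ ^ 2))
    (hzm : zm = Complex.I * δ - Real.sqrt (ωp ^ 2 - δ ^ 2)) :
    ‖Complex.exp (Complex.I * zp * Δt)‖ = Real.exp (-δ * Δt) ∧
    ‖Complex.exp (Complex.I * zm * Δt)‖ = Real.exp (-δ * Δt) ∧
    Real.exp (-δ * Δt) < 1 ∧
    ∀ (c z : ℂ), (z = zp ∨ z = zm) → ∀ (E : ℕ → ℂ) (M : ℝ),
      (∀ n : ℕ, ‖E n‖ ≤ M) →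
      ∀ F : ℕ → ℂ, F 0 = c * E 0 →
        (∀ N : ℕ, F (N + 1) = F N * Complex.exp (Complex.I * z * Δt) + c * E (N + 1)) →
        ∀ N : ℕ, ‖F N‖ ≤ ‖c‖ * M / (1 - Real.exp (-δ * Δt)) := by
  have hre : ∀ z : ℂ, (z = zp ∨ z = zm) →
      (Complex.I * z * (Δt : ℂ)).re = -δ * Δt := by
    intro z hz
    rcases hz with h | h <;> [rw [h, hzp]; rw [h, hzm]] <;>
      simp [Complex.mul_re, Complex.mul_im] <;> ring
  have habs : ∀ z : ℂ, (z = zp ∨ z = zm) →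
      ‖Complex.exp (Complex.I * z * Δt)‖ = Real.exp (-δ * Δt) := by
    intro z hz
    rw [Complex.norm_exp, hre z hz]
  have hlt : Real.exp (-δ * Δt) < 1 := by
    rw [Real.exp_lt_one_iff]; nlinarith
  refine ⟨habs zp (Or.inl rfl), habs zm (Or.inr rfl), hlt, ?_⟩
  intro c z hz E M hE F h0 hrec N
  have hr0 : (0:ℝ) ≤ Real.exp (-δ * Δt) := (Real.exp_pos _).le
  have hM : 0 ≤ M := le_trans (norm_nonneg _) (hE 0)
  have := tgm_aux (Real.exp (-δ * Δt)) (‖c‖ * M) hr0 hlt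
    (mul_nonneg (norm_nonneg _) hM)
    (Complex.exp (Complex.I * z * Δt)) (habs z hz) F (fun n => c * E n)
    (fun n => by rw [norm_mul]; exact mul_le_mul_of_nonneg_left (hE n) (norm_nonneg _))
    h0 hrec N
  exact this
end
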